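/- Robustness dual formula: let K ⊆ Her_n be a proper convex cone (closed, pointed, with nonempty interior), F ⊆ Her_n compact with {λZ : 0 ≤ λ ≤ 1, Z ∈ F} convex and F ∩ int(K) ≠ ∅. For E ∈ Her_n with the property that δZ − E ∉ K for all δ < 1 and Z ∈ F, one has 1 + R(E) = max{⟨φ, E⟩ : φ ∈ K*, ⟨φ, Z⟩ ≤ 1 for all Z ∈ F}, where R(E) = min{λ ∈ ℝ : (1+λ)Z − E ∈ K for some Z ∈ F}. -/

import Mathlib

open Matrix

noncomputable def herInner {n : ℕ} (A B : selfAdjoint (Matrix (Fin n) (Fin n) ℂ)) : ℝ :=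
  (((A : Matrix (Fin n) (Fin n) ℂ) * (B : Matrix (Fin n) (Fin n) ℂ)).trace).re

namespace StmtAux
variable {n : ℕ}

local notation "V" => selfAdjoint (Matrix (Fin n) (Fin n) ℂ)
local notation "M" => Matrix (Fin n) (Fin n) ℂ

instance : ContinuousSMul ℝ (selfAdjoint (Matrix (Fin n) (Fin n) ℂ)) := by
  constructor
  apply Continuous.subtype_mk
  exact continuous_fst.smul (continuous_subtype_val.comp continuous_snd)

noncomputable def coeLM : selfAdjoint (Matrix (Fin n) (Fin n) ℂ) →ₗ[ℝ] Matrix (Fin n) (Fin n) ℂ where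
  toFun x := x
  map_add' _ _ := rfl
  map_smul' _ _ := rfl

instance : FiniteDimensional ℝ (selfAdjoint (Matrix (Fin n) (Fin n) ℂ)) :=
  FiniteDimensional.of_injective coeLM Subtype.coe_injective

lemma herInner_comm (A B : V) : herInner A B = herInner B A := by
  unfold herInner; rw [Matrix.trace_mul_comm]

lemma herInner_add_left (A B C : V) : herInner (A + B) C = herInner A C + herInner B C := by
  simp [herInner, add_mul]

lemma herInner_smul_left (c : ℝ) (A B : V) : herInner (c • A) B = c * herInner A B := by
  have : ((c • A : V) : M) = c • (A : M) := rfl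
  simp [herInner, this, smul_mul_assoc]

lemma herInner_add_right (A B C : V) : herInner A (B + C) = herInner A B + herInner A C := by
  rw [herInner_comm, herInner_add_left, herInner_comm B A, herInner_comm C A]

lemma herInner_smul_right (c : ℝ) (A B : V) : herInner A (c • B) = c * herInner A B := by
  rw [herInner_comm, herInner_smul_left, herInner_comm]

lemma herInner_neg_right (A B : V) : herInner A (-B) = -herInner A B := by
  have : (-B : V) = (-1 : ℝ) • B := by ext1; simp [selfAdjoint.val_smul]
  rw [this, herInner_smul_right]; ring

lemma herInner_sub_right (A B C : V) : herInner A (B - C) = herInner A B - herInner A C := by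
  rw [sub_eq_add_neg, herInner_add_right, herInner_neg_right, sub_eq_add_neg]

lemma herInner_self (A : V) : herInner A A = ∑ i, ∑ j, Complex.normSq ((A : M) i j) := by
  have hA : (A : M)ᴴ = (A : M) := A.2
  have hentry : ∀ i j, (A : M) j i = (starRingEnd ℂ) ((A : M) i j) := by
    intro i j
    conv_lhs => rw [← hA]
    rw [Matrix.conjTranspose_apply]
    rfl
  unfold herInner
  rw [Matrix.trace]
  simp only [Matrix.diag, Matrix.mul_apply]
  rw [Complex.re_sum]
  refine Finset.sum_congr rfl fun i _ => ?_
  rw [Complex.re_sum]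
  refine Finset.sum_congr rfl fun j _ => ?_
  rw [hentry i j, Complex.mul_conj]
  simp

noncomputable def bform : selfAdjoint (Matrix (Fin n) (Fin n) ℂ) →ₗ[ℝ]
    selfAdjoint (Matrix (Fin n) (Fin n) ℂ) →ₗ[ℝ] ℝ :=
  LinearMap.mk₂ ℝ herInner herInner_add_left
    (fun c A B => herInner_smul_left c A B)
    herInner_add_right (fun c A B => herInner_smul_right c A B)

lemma bform_nondeg : LinearMap.BilinForm.Nondegenerate (bform (n := n)) := by
  suffices hL : LinearMap.SeparatingLeft (bform (n := n)) from
    ⟨hL, fun y hy => hL y fun x => (herInner_comm y x).trans (hy x)⟩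
  intro x hx
  have h := hx x
  rw [show (bform (n := n)) x x = herInner x x from rfl, herInner_self] at h
  ext i j
  have h2 : ∀ i ∈ Finset.univ, ∑ j, Complex.normSq ((x : M) i j) = 0 := by
    intro i _
    have := (Finset.sum_eq_zero_iff_of_nonneg (fun i _ => Finset.sum_nonneg
      (fun j _ => Complex.normSq_nonneg _))).1 h
    exact this i (Finset.mem_univ i)
  have h3 := (Finset.sum_eq_zero_iff_of_nonneg
    (fun j _ => Complex.normSq_nonneg _)).1 (h2 i (Finset.mem_univ i)) j (Finset.mem_univ j)
  have : (x : M) i j = 0 := by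
    exact Complex.normSq_eq_zero.1 h3
  simpa using this

lemma herInner_repr (f : selfAdjoint (Matrix (Fin n) (Fin n) ℂ) →L[ℝ] ℝ) :
    ∃ φ : V, ∀ x, herInner φ x = f x := by
  refine ⟨(LinearMap.BilinForm.toDual (bform (n := n)) bform_nondeg).symm f.toLinearMap, fun x => ?_⟩
  have h1 := LinearMap.BilinForm.toDual_def (B := bform (n := n)) bform_nondeg
    (m := (LinearMap.BilinForm.toDual (bform (n := n)) bform_nondeg).symm f.toLinearMap) (n := x)
  have h2 := (LinearMap.BilinForm.toDual (bform (n := n)) bform_nondeg).apply_symm_apply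
    f.toLinearMap
  rw [h2] at h1
  exact h1.symm

end StmtAux

open StmtAux Topology

set_option maxHeartbeats 1000000 in
theorem stmt_14 {n : ℕ}
    (K : Set (selfAdjoint (Matrix (Fin n) (Fin n) ℂ)))
    (hKclosed : IsClosed K) (hKconv : Convex ℝ K)
    (hKcone : ∀ x ∈ K, ∀ c : ℝ, 0 ≤ c → c • x ∈ K)
    (hKpointed : ∀ x ∈ K, -x ∈ K → x = 0)
    (hKint : (interior K).Nonempty)
    (F : Set (selfAdjoint (Matrix (Fin n) (Fin n) ℂ))) (hFcomp : IsCompact F)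
    (hFconi : Convex ℝ {Y | ∃ lam : ℝ, 0 ≤ lam ∧ lam ≤ 1 ∧ ∃ Z ∈ F, Y = lam • Z})
    (hFK : (F ∩ interior K).Nonempty)
    (E : selfAdjoint (Matrix (Fin n) (Fin n) ℂ))
    (hEN : ∀ δ : ℝ, δ < 1 → ∀ Z ∈ F, δ • Z - E ∉ K)
    (R : ℝ) (hR : R = sInf {lam : ℝ | 0 ≤ lam ∧ ∃ Z ∈ F, (1 + lam) • Z - E ∈ K}) :
    IsGreatest {r : ℝ | ∃ φ, (∀ k ∈ K, 0 ≤ herInner φ k) ∧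
      (∀ Z ∈ F, herInner φ Z ≤ 1) ∧ r = herInner φ E} (1 + R) := by
  classical
  obtain ⟨Z₀, hZ₀F, hZ₀K⟩ := hFK
  set S := {lam : ℝ | 0 ≤ lam ∧ ∃ Z ∈ F, (1 + lam) • Z - E ∈ K} with hSdef
  have hK0 : (0 : selfAdjoint (Matrix (Fin n) (Fin n) ℂ)) ∈ K := by
    have := hKcone Z₀ (interior_subset hZ₀K) 0 le_rfl
    simpa using this
  -- S is nonempty
  have hSne : S.Nonempty := by
    have hcont : Continuous fun t : ℝ => Z₀ - t • E :=
      continuous_const.sub (continuous_id.smul continuous_const)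
    have h0 : Z₀ - (0:ℝ) • E ∈ interior K := by simpa using hZ₀K
    have h1 : ∀ᶠ t in 𝓝 (0:ℝ), Z₀ - t • E ∈ interior K :=
      hcont.continuousAt.eventually_mem (isOpen_interior.mem_nhds h0)
    have h2 : ∀ᶠ t in 𝓝[>] (0:ℝ), Z₀ - t • E ∈ interior K :=
      h1.filter_mono nhdsWithin_le_nhds
    have h3 : ∀ᶠ t in 𝓝[>] (0:ℝ), t ∈ Set.Ioo (0:ℝ) 1 :=
      Ioo_mem_nhdsGT_of_mem (by constructor <;> norm_num)
    obtain ⟨t, ht1, ht2⟩ := (h2.and h3).exists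
    obtain ⟨ht0, ht1'⟩ := ht2
    refine ⟨1/t - 1, ?_, Z₀, hZ₀F, ?_⟩
    · have : (1:ℝ) ≤ 1/t := by
        rw [le_div_iff₀ ht0]; linarith
      linarith
    · have heq : (1 + (1/t - 1)) • Z₀ - E = (1/t) • (Z₀ - t • E) := by
        have htne : t ≠ 0 := ne_of_gt ht0
        rw [smul_sub, smul_smul]
        congr 2
        · congr 1; field_simp; ring
        · field_simp; simp
      rw [heq]
      exact hKcone _ (interior_subset ht1) _ (by positivity)
  have hSbdd : BddBelow S := ⟨0, fun x hx => hx.1⟩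
  have hR0 : 0 ≤ R := hR ▸ le_csInf hSne fun x hx => hx.1
  have h1R : (0:ℝ) < 1 + R := by linarith
  -- the key non-membership fact below 1 + R
  have key : ∀ μ : ℝ, μ < 1 + R → ∀ Z ∈ F, μ • Z - E ∉ K := by
    intro μ hμ Z hZ hmem
    rcases lt_or_ge μ 1 with h | h
    · exact hEN μ h Z hZ hmem
    · have hlam : μ - 1 ∈ S := ⟨by linarith, Z, hZ, by rwa [show (1 + (μ-1)) = μ by ring]⟩
      have : R ≤ μ - 1 := hR ▸ csInf_le hSbdd hlam
      linarith
  -- the convex set T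
  set T : Set (selfAdjoint (Matrix (Fin n) (Fin n) ℂ)) :=
    {Y | ∃ μ : ℝ, 0 ≤ μ ∧ μ ≤ 1 + R ∧ ∃ Z ∈ F, Y = μ • Z - E} with hTdef
  have hTconv : Convex ℝ T := by
    rintro Y₁ ⟨μ₁, hμ₁0, hμ₁R, Z₁, hZ₁, rfl⟩ Y₂ ⟨μ₂, hμ₂0, hμ₂R, Z₂, hZ₂, rfl⟩ a b ha hb hab
    have m₁ : (μ₁/(1+R)) • Z₁ ∈ {Y | ∃ lam : ℝ, 0 ≤ lam ∧ lam ≤ 1 ∧ ∃ Z ∈ F, Y = lam • Z} :=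
      ⟨μ₁/(1+R), by positivity, by rw [div_le_one h1R]; exact hμ₁R, Z₁, hZ₁, rfl⟩
    have m₂ : (μ₂/(1+R)) • Z₂ ∈ {Y | ∃ lam : ℝ, 0 ≤ lam ∧ lam ≤ 1 ∧ ∃ Z ∈ F, Y = lam • Z} :=
      ⟨μ₂/(1+R), by positivity, by rw [div_le_one h1R]; exact hμ₂R, Z₂, hZ₂, rfl⟩
    obtain ⟨lam, hlam0, hlam1, Z, hZ, hlameq⟩ := hFconi m₁ m₂ ha hb hab
    refine ⟨(1+R) * lam, by positivity, ?_, Z, hZ, ?_⟩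
    · calc (1+R) * lam ≤ (1+R) * 1 := mul_le_mul_of_nonneg_left hlam1 h1R.le
        _ = 1 + R := mul_one _
    · have hmul := congrArg (fun W : selfAdjoint (Matrix (Fin n) (Fin n) ℂ) => (1+R) • W) hlameq
      simp only [smul_add, smul_smul] at hmul
      have e₁ : (1+R) * (a * (μ₁/(1+R))) = a * μ₁ := by field_simp
      have e₂ : (1+R) * (b * (μ₂/(1+R))) = b * μ₂ := by field_simp
      rw [e₁, e₂] at hmul
      rw [← hmul]
      match_scalars <;> linarith
  have hTdisj : Disjoint (interior K) T := by
    rw [Set.disjoint_left]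
    rintro Y hYint ⟨μ, hμ0, hμR, Z, hZ, rfl⟩
    have hcont : Continuous fun t : ℝ => (μ - t) • Z - E :=
      (((continuous_const.sub continuous_id).smul continuous_const).sub continuous_const)
    have h0 : (μ - (0:ℝ)) • Z - E ∈ interior K := by simpa using hYint
    have h1 : ∀ᶠ t in 𝓝 (0:ℝ), (μ - t) • Z - E ∈ interior K :=
      hcont.continuousAt.eventually_mem (isOpen_interior.mem_nhds h0)
    have h2 : ∀ᶠ t in 𝓝[>] (0:ℝ), (μ - t) • Z - E ∈ interior K :=
      h1.filter_mono nhdsWithin_le_nhds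
    have h3 : ∀ᶠ t in 𝓝[>] (0:ℝ), t ∈ Set.Ioi (0:ℝ) := self_mem_nhdsWithin
    obtain ⟨t, ht1, ht2⟩ := (h2.and h3).exists
    have ht0 : (0:ℝ) < t := ht2
    exact key (μ - t) (by linarith) Z hZ (interior_subset ht1)
  -- separation
  obtain ⟨f, u, hfs, hft⟩ :=
    geometric_hahn_banach_open hKconv.interior isOpen_interior hTconv hTdisj
  -- f is nonpositive on K
  have hfK : ∀ k ∈ K, f k ≤ 0 := by
    intro k hk
    by_contra hpos
    push_neg at hpos
    set c : ℝ := (2*(|u| + |f Z₀|) + 2) / f k with hc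
    have hc0 : 0 ≤ c := div_nonneg (by positivity) hpos.le
    have hP : (1/2 : ℝ) • Z₀ + (1/2 : ℝ) • (c • k) ∈ interior K :=
      hKconv.combo_interior_self_mem_interior hZ₀K (hKcone k hk c hc0)
        (by norm_num) (by norm_num) (by norm_num)
    have hlt := hfs _ hP
    simp only [map_add, _root_.map_smul, smul_eq_mul] at hlt
    have hcfk : c * f k = 2*(|u| + |f Z₀|) + 2 := by
      rw [hc]; field_simp
    rw [hcfk] at hlt
    have h1 := le_abs_self u
    have h2 := neg_abs_le (f Z₀)
    have h3 := abs_nonneg (f Z₀)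
    linarith
  have hfZ₀le : f Z₀ ≤ 0 := hfK Z₀ (interior_subset hZ₀K)
  -- u is nonnegative
  have hu0 : 0 ≤ u := by
    by_contra hneg
    push_neg at hneg
    rcases eq_or_lt_of_le hfZ₀le with heq | hlt
    · have := hfs Z₀ hZ₀K
      rw [heq] at this
      linarith
    · set θ : ℝ := min 1 (u/(2 * f Z₀)) with hθ
      have hθpos : 0 < θ :=
        lt_min one_pos (div_pos_of_neg_of_neg hneg (by linarith))
      have hθ1 : θ ≤ 1 := min_le_left _ _
      have hP : θ • Z₀ + (1-θ) • (0 : selfAdjoint (Matrix (Fin n) (Fin n) ℂ)) ∈ interior K :=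
        hKconv.combo_interior_self_mem_interior hZ₀K hK0 hθpos (by linarith) (by ring)
      have hlt2 := hfs _ hP
      simp only [map_add, _root_.map_smul, smul_eq_mul, smul_zero, map_zero, add_zero] at hlt2
      have hm := min_le_right 1 (u/(2 * f Z₀))
      have hne : f Z₀ ≠ 0 := ne_of_lt hlt
      have h4 : (u/(2 * f Z₀)) * f Z₀ = u/2 := by
        field_simp
      have h5 := mul_le_mul_of_nonpos_right hm (le_of_lt hlt)
      rw [h4] at h5
      linarith
  -- f Z₀ is strictly negative
  have hTmem : (1 + R) • Z₀ - E ∈ T := ⟨1+R, by linarith, le_rfl, Z₀, hZ₀F, rfl⟩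
  have hfZ₀lt : f Z₀ < 0 := by
    rcases eq_or_lt_of_le hfZ₀le with heq | hlt
    · exfalso
      have hf0 : ∀ W, f W = 0 := by
        intro W
        have hcont : Continuous fun t : ℝ => Z₀ + t • W :=
          continuous_const.add (continuous_id.smul continuous_const)
        have h0 : Z₀ + (0:ℝ) • W ∈ interior K := by simpa using hZ₀K
        have h1 : ∀ᶠ t in 𝓝 (0:ℝ), Z₀ + t • W ∈ interior K :=
          hcont.continuousAt.eventually_mem (isOpen_interior.mem_nhds h0)
        have hnegt : Filter.Tendsto (fun t : ℝ => -t) (𝓝 0) (𝓝 0) := by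
          simpa using (continuous_neg : Continuous fun t : ℝ => -t).tendsto 0
        have h2 : ∀ᶠ t in 𝓝 (0:ℝ), Z₀ + (-t) • W ∈ interior K := hnegt.eventually h1
        have h3 : ∀ᶠ t in 𝓝[>] (0:ℝ), (Z₀ + t • W ∈ interior K) ∧ (Z₀ + (-t) • W ∈ interior K) :=
          (h1.and h2).filter_mono nhdsWithin_le_nhds
        have h4 : ∀ᶠ t in 𝓝[>] (0:ℝ), t ∈ Set.Ioi (0:ℝ) := self_mem_nhdsWithin
        obtain ⟨t, ⟨hta, htb⟩, htc⟩ := (h3.and h4).exists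
        have ht0 : (0:ℝ) < t := htc
        have ha := hfK _ (interior_subset hta)
        have hb := hfK _ (interior_subset htb)
        simp only [map_add, _root_.map_smul, smul_eq_mul] at ha hb
        rw [heq] at ha hb
        have h5 : f W ≤ 0 := le_of_mul_le_mul_left (by linarith : t * f W ≤ t * 0) ht0
        have h6 : -f W ≤ 0 := le_of_mul_le_mul_left (by linarith : t * (-f W) ≤ t * 0) ht0
        linarith
      have h5 := hft _ hTmem
      have h6 := hfs Z₀ hZ₀K
      rw [hf0] at h5 h6
      linarith
    · exact hlt
  -- maximize -f over F
  obtain ⟨Zm, hZmF, hZmax⟩ :=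
    hFcomp.exists_isMaxOn ⟨Z₀, hZ₀F⟩ (f.continuous.neg.continuousOn)
  have hZm : ∀ Z ∈ F, -f Z ≤ -f Zm := fun Z hZ => hZmax hZ
  set s₀ : ℝ := -f Zm with hs₀
  have hs₀pos : 0 < s₀ := lt_of_lt_of_le (by linarith) (hZm Z₀ hZ₀F)
  -- the representing matrix
  obtain ⟨φ, hφ⟩ := StmtAux.herInner_repr ((- s₀⁻¹) • f)
  have hφval : ∀ x, herInner φ x = -s₀⁻¹ * f x := by
    intro x
    rw [hφ x, ContinuousLinearMap.smul_apply, smul_eq_mul]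
  have h_dual : ∀ k ∈ K, 0 ≤ herInner φ k := by
    intro k hk
    rw [hφval]
    have h3 : -s₀⁻¹ * f k = s₀⁻¹ * (-f k) := by ring
    rw [h3]
    exact mul_nonneg (inv_nonneg.2 hs₀pos.le) (by linarith [hfK k hk])
  have h_le1 : ∀ Z ∈ F, herInner φ Z ≤ 1 := by
    intro Z hZF
    rw [hφval]
    have h1 : -f Z ≤ s₀ := hZm Z hZF
    have h2 : s₀⁻¹ * s₀ = 1 := inv_mul_cancel₀ (ne_of_gt hs₀pos)
    have hinv : 0 < s₀⁻¹ := inv_pos.2 hs₀pos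
    have h3 : -s₀⁻¹ * f Z = s₀⁻¹ * (-f Z) := by ring
    rw [h3]
    calc s₀⁻¹ * (-f Z) ≤ s₀⁻¹ * s₀ := mul_le_mul_of_nonneg_left h1 hinv.le
      _ = 1 := h2
  have hE_ge : 1 + R ≤ herInner φ E := by
    have h1 := hft _ ⟨1+R, by linarith, le_rfl, Zm, hZmF, rfl⟩
    simp only [map_sub, _root_.map_smul, smul_eq_mul] at h1
    -- u ≤ (1+R) * f Zm - f E
    rw [hφval]
    have h2 : s₀⁻¹ * s₀ = 1 := inv_mul_cancel₀ (ne_of_gt hs₀pos)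
    have hinv : 0 < s₀⁻¹ := inv_pos.2 hs₀pos
    have h3 : f E ≤ (1+R) * f Zm := by linarith
    have h4 : (1+R) * s₀ ≤ -f E := by
      have h4' : (1+R) * s₀ = -((1+R) * f Zm) := by rw [hs₀]; ring
      linarith
    have h5 : s₀⁻¹ * ((1+R) * s₀) ≤ s₀⁻¹ * (-f E) := mul_le_mul_of_nonneg_left h4 hinv.le
    have h6 : s₀⁻¹ * ((1+R) * s₀) = (1 + R) * (s₀⁻¹ * s₀) := by ring
    have h7 : -s₀⁻¹ * f E = s₀⁻¹ * (-f E) := by ring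
    rw [h6, h2, mul_one] at h5
    linarith
  -- upper bound
  have hub : ∀ r ∈ {r : ℝ | ∃ φ, (∀ k ∈ K, 0 ≤ herInner φ k) ∧
      (∀ Z ∈ F, herInner φ Z ≤ 1) ∧ r = herInner φ E}, r ≤ 1 + R := by
    rintro r ⟨ψ, hψK, hψF, rfl⟩
    have hle : herInner ψ E - 1 ≤ R := by
      rw [hR]
      refine le_csInf hSne ?_
      rintro lam ⟨hlam0, Z, hZF, hmem⟩
      have h1 := hψK _ hmem
      rw [StmtAux.herInner_sub_right, StmtAux.herInner_smul_right] at h1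
      have h2 := hψF Z hZF
      have h3 : (1+lam) * herInner ψ Z ≤ (1+lam) * 1 :=
        mul_le_mul_of_nonneg_left h2 (by linarith)
      linarith
    linarith
  constructor
  · have heq : herInner φ E = 1 + R :=
      le_antisymm (hub _ ⟨φ, h_dual, h_le1, rfl⟩) hE_ge
    exact ⟨φ, h_dual, h_le1, heq.symm⟩
  · exact fun r hr => hub r hr
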